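/- Let f be a function from a closed interval [μ,ν] to the extended reals. If f is left lower semicontinuous at every point of (μ,ν] (i.e., f(α) ≤ liminf_{γ→α⁻} f(γ) for all α ∈ (μ,ν]), then f is Lebesgue measurable on [μ,ν]. -/

import Mathlib

open Filter Set

/-- If `f : [μ, ν] → ℝ ∪ {±∞}` is left lower semicontinuous at every point of `(μ, ν]`,
then `f` is measurable on `[μ, ν]`. -/
theorem stmt_1 (μ ν : ℝ) (hμν : μ < ν) (f : ℝ → EReal)
    (h : ∀ α ∈ Set.Ioc μ ν, f α ≤ Filter.liminf f (nhdsWithin α (Set.Ico μ α))) :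
    ∀ r : ℝ, MeasurableSet {ξ ∈ Set.Icc μ ν | (r : EReal) < f ξ} := by
  intro r
  set S : Set ℝ := {ξ ∈ Set.Ioc μ ν | (r : EReal) < f ξ} with hS
  -- each point of S has S as a left-neighborhood
  have key : ∀ α ∈ S, S ∈ nhdsWithin α (Set.Iio α) := by
    intro α hα
    obtain ⟨hαI, hrα⟩ := hα
    have hliminf : (r : EReal) < Filter.liminf f (nhdsWithin α (Set.Ico μ α)) :=
      lt_of_lt_of_le hrα (h α hαI)
    have hev : ∀ᶠ γ in nhdsWithin α (Set.Ico μ α), (r : EReal) < f γ :=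
      Filter.eventually_lt_of_lt_liminf hliminf
    have hmem : ∀ᶠ γ in nhdsWithin α (Set.Ico μ α), γ ∈ Set.Ico μ α :=
      self_mem_nhdsWithin
    have hgtμ : ∀ᶠ γ in nhdsWithin α (Set.Ico μ α), μ < γ :=
      nhdsWithin_le_nhds (eventually_gt_nhds hαI.1)
    have hE : ∀ᶠ γ in nhdsWithin α (Set.Ico μ α), γ ∈ S := by
      filter_upwards [hev, hmem, hgtμ] with γ h1 h2 h3
      exact ⟨⟨h3, le_of_lt (lt_of_lt_of_le h2.2 hαI.2)⟩, h1⟩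
    -- transfer from 𝓝[Ico μ α] α to 𝓝[Iio α] α
    have hsets : Set.Iio α =ᶠ[nhds α] Set.Ico μ α := by
      filter_upwards [eventually_gt_nhds hαI.1] with x hx
      simp only [Set.mem_Iio, Set.mem_Ico, eq_iff_iff]
      exact ⟨fun hxa => ⟨le_of_lt hx, hxa⟩, fun hxa => hxa.2⟩
    have : nhdsWithin α (Set.Iio α) = nhdsWithin α (Set.Ico μ α) := by
      apply nhdsWithin_eq_nhdsWithin (Set.mem_Ioi.2 hαI.1) isOpen_Ioi
      ext x
      simp only [Set.mem_inter_iff, Set.mem_Iio, Set.mem_Ico, Set.mem_Ioi]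
      constructor
      · rintro ⟨h1, h2⟩; exact ⟨⟨le_of_lt h2, h1⟩, h2⟩
      · rintro ⟨h1, h2⟩; exact ⟨h1.2, h2⟩
    rw [this]
    exact hE
  -- dualize via negation and apply the right-neighborhood measurability lemma
  have hT : MeasurableSet ((fun x : ℝ => -x) ⁻¹' S) := by
    apply MeasurableSet.of_mem_nhdsGT
    intro x hx
    have hαS : -x ∈ S := hx
    have htend : Filter.Tendsto (fun z : ℝ => -z) (nhdsWithin x (Set.Ioi x))
        (nhdsWithin (-x) (Set.Iio (-x))) := by
      apply tendsto_nhdsWithin_of_tendsto_nhds_of_eventually_within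
      · exact tendsto_nhdsWithin_of_tendsto_nhds continuous_neg.continuousAt
      · filter_upwards [self_mem_nhdsWithin] with z hz
        exact Set.mem_Iio.2 (neg_lt_neg hz)
    exact htend.eventually (key _ hαS)
  have hSmeas : MeasurableSet S := by
    have : S = (fun x : ℝ => -x) ⁻¹' ((fun x : ℝ => -x) ⁻¹' S) := by
      ext x; simp
    rw [this]
    exact hT.preimage measurable_neg
  -- decompose the target set
  have hdecomp : {ξ ∈ Set.Icc μ ν | (r : EReal) < f ξ}
      = S ∪ {ξ ∈ ({μ} : Set ℝ) | (r : EReal) < f ξ} := by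
    ext x
    simp only [Set.mem_setOf_eq, Set.mem_union, Set.mem_Icc, Set.mem_Ioc, hS,
      Set.mem_singleton_iff]
    constructor
    · rintro ⟨⟨h1, h2⟩, h3⟩
      rcases eq_or_lt_of_le h1 with heq | hlt
      · exact Or.inr ⟨heq.symm, h3⟩
      · exact Or.inl ⟨⟨hlt, h2⟩, h3⟩
    · rintro (⟨⟨h1, h2⟩, h3⟩ | ⟨h1, h2⟩)
      · exact ⟨⟨le_of_lt h1, h2⟩, h3⟩
      · exact ⟨⟨le_of_eq h1.symm, h1 ▸ le_of_lt hμν⟩, h2⟩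
  rw [hdecomp]
  have hsub : ({ξ ∈ ({μ} : Set ℝ) | (r : EReal) < f ξ}).Subsingleton := by
    intro x hx y hy
    have hx1 : x = μ := hx.1
    have hy1 : y = μ := hy.1
    rw [hx1, hy1]
  exact hSmeas.union hsub.measurableSet
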